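/- Suppose (μ,θ) jointly satisfy E[Σ_i (r_i − m_μ(b_i)) ṁ_μ(b_i) π_θ(b,i)] = 0 and E[Σ_i m_μ(b_i) π̇_θ(b,i)] − 2λθ = 0, and the compatibility condition π̇_θ(b,i)/π_θ(b,i) = ṁ_μ(b_i) holds for all b and i. Then θ is a stationary point of the true penalized objective: E[Σ_i r_i π̇_θ(b,i)] − 2λθ = 0. -/
import Mathlib


open scoped RealInnerProductSpace
open Finset MeasureTheory

/-- If (μ,θ) jointly solve the critic and penalized-actor estimating equations and the
compatibility condition holds, then θ is a stationary point of the true penalized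
objective: E[Σ_i r_i π̇_θ(b,i)] − 2λθ = 0. -/
theorem compatibility_implies_stationary
    {Ω : Type*} [MeasurableSpace Ω] (P : Measure Ω) [IsProbabilityMeasure P]
    (d N : ℕ)
    (b : Ω → Fin N → EuclideanSpace ℝ (Fin d)) (r : Ω → Fin N → ℝ)
    (pol : (Fin N → EuclideanSpace ℝ (Fin d)) → Fin N → ℝ)
    (poldot : (Fin N → EuclideanSpace ℝ (Fin d)) → Fin N → EuclideanSpace ℝ (Fin d))
    (mc : EuclideanSpace ℝ (Fin d) → ℝ)
    (mdot : EuclideanSpace ℝ (Fin d) → EuclideanSpace ℝ (Fin d))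
    (lam : ℝ) (hlam : 0 < lam) (θ : EuclideanSpace ℝ (Fin d))
    (hint1 : Integrable (fun ω => ∑ i : Fin N,
        ((r ω i - mc (b ω i)) * pol (b ω) i) • mdot (b ω i)) P)
    (hint2 : Integrable (fun ω => ∑ i : Fin N, mc (b ω i) • poldot (b ω) i) P)
    (hcritic : ∫ ω, ∑ i : Fin N,
        ((r ω i - mc (b ω i)) * pol (b ω) i) • mdot (b ω i) ∂P = 0)
    (hactor : (∫ ω, ∑ i : Fin N, mc (b ω i) • poldot (b ω) i ∂P) - (2 * lam) • θ = 0)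
    (hcompat : ∀ (c : Fin N → EuclideanSpace ℝ (Fin d)) (i : Fin N),
        poldot c i = pol c i • mdot (c i)) :
    (∫ ω, ∑ i : Fin N, r ω i • poldot (b ω) i ∂P) - (2 * lam) • θ = 0 := by
  have key : (fun ω => ∑ i : Fin N, r ω i • poldot (b ω) i)
      = fun ω => (∑ i : Fin N, ((r ω i - mc (b ω i)) * pol (b ω) i) • mdot (b ω i))
        + ∑ i : Fin N, mc (b ω i) • poldot (b ω) i := by
    funext ω
    rw [← Finset.sum_add_distrib]
    refine Finset.sum_congr rfl fun i _ => ?_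
    rw [hcompat]
    rw [smul_smul, smul_smul, ← add_smul]
    congr 1
    ring
  rw [key, integral_add hint1 hint2, hcritic, zero_add, hactor]
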